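/- Let $A$ be a dilation matrix with nested ellipsoids $\Delta_k = A^k(\Delta)$, and define $\rho_A(x) = b^k$ for $x \in \Delta_{k+1}\setminus\Delta_k$ and $\rho_A(0) = 0$, where $b = |\det A|$. Then $\rho_A$ is a homogeneous quasi-norm associated with $A$: $\rho_A(x) = 0$ iff $x = 0$, $\rho_A(Ax) = b\,\rho_A(x)$ for all $x$, and there exists $c > 0$ with $\rho_A(x+y) \le c(\rho_A(x)+\rho_A(y))$ for all $x, y$. -/

import Mathlib

open Filter Topology

attribute [local instance] Matrix.linftyOpNormedRing Matrix.linftyOpNormedAlgebra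

lemma aux_norm_pow_tendsto {d : ℕ} (hd : 0 < d) (B : Matrix (Fin d) (Fin d) ℂ)
    (h : ∀ z ∈ spectrum ℂ B, ‖z‖ < 1) :
    Tendsto (fun n : ℕ => ‖B ^ n‖) atTop (𝓝 0) := by
  haveI : Nonempty (Fin d) := ⟨⟨0, hd⟩⟩
  haveI : CompleteSpace (Matrix (Fin d) (Fin d) ℂ) := FiniteDimensional.complete ℂ _
  have h1 : spectralRadius ℂ B < 1 := by
    have := spectrum.spectralRadius_lt_of_forall_lt (a := B) (r := 1)
      (fun z hz => by simpa [← NNReal.coe_lt_coe, coe_nnnorm] using h z hz)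
    simpa using this
  obtain ⟨C, hC1, hC2⟩ := exists_between h1
  have hCtop : C ≠ ⊤ := (hC2.trans_le le_top).ne
  set r : NNReal := C.toNNReal with hr
  have hCr : (r : ENNReal) = C := ENNReal.coe_toNNReal hCtop
  have hrlt : r < 1 := by
    rw [← ENNReal.coe_lt_one_iff, hCr]; exact hC2
  have h2 : ∀ᶠ n : ℕ in atTop, (‖B ^ n‖₊ : ENNReal) ^ (1 / (n : ℝ)) < C :=
    (spectrum.pow_nnnorm_pow_one_div_tendsto_nhds_spectralRadius B).eventually_lt_const hC1
  have h3 : ∀ᶠ n : ℕ in atTop, ‖B ^ n‖ ≤ (r : ℝ) ^ n := by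
    filter_upwards [h2, eventually_gt_atTop 0] with n hn hn0
    have hne : (n : ℝ) ≠ 0 := Nat.cast_ne_zero.mpr hn0.ne'
    have : ((‖B ^ n‖₊ : ENNReal) ^ (1 / (n : ℝ))) ^ (n : ℝ) ≤ C ^ (n : ℝ) :=
      ENNReal.rpow_le_rpow hn.le (Nat.cast_nonneg n)
    rw [← ENNReal.rpow_mul, one_div, inv_mul_cancel₀ hne, ENNReal.rpow_one, ← hCr,
      ← ENNReal.coe_rpow_of_nonneg _ (Nat.cast_nonneg n), ENNReal.coe_le_coe] at this
    have h4 : ‖B ^ n‖₊ ≤ r ^ n := by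
      simpa [NNReal.rpow_natCast] using this
    calc ‖B ^ n‖ = ((‖B ^ n‖₊ : NNReal) : ℝ) := rfl
      _ ≤ ((r ^ n : NNReal) : ℝ) := NNReal.coe_le_coe.mpr h4
      _ = (r : ℝ) ^ n := by push_cast; ring
  have hrpow : Tendsto (fun n : ℕ => (r : ℝ) ^ n) atTop (𝓝 0) :=
    tendsto_pow_atTop_nhds_zero_of_lt_one r.coe_nonneg (by exact_mod_cast hrlt)
  exact squeeze_zero' (Eventually.of_forall fun n => norm_nonneg _) h3 hrpow

lemma aux_spec_inv {d : ℕ} (A : Matrix (Fin d) (Fin d) ℝ) (hA : IsUnit A.det)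
    (hspec : ∀ z ∈ spectrum ℂ (A.map Complex.ofReal), 1 < ‖z‖) :
    ∀ z ∈ spectrum ℂ (A.map Complex.ofReal)⁻¹, ‖z‖ < 1 := by
  have hdet : IsUnit (A.map Complex.ofReal).det := by
    have h1 : (A.map Complex.ofReal).det = (A.det : ℂ) :=
      (RingHom.map_det Complex.ofRealHom A).symm
    rw [h1]
    exact hA.map Complex.ofRealHom
  have hU : IsUnit (A.map Complex.ofReal) := (Matrix.isUnit_iff_isUnit_det _).mpr hdet
  obtain ⟨u, hu⟩ := hU
  intro z hz
  have hinv : (A.map Complex.ofReal)⁻¹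
      = ((u⁻¹ : (Matrix (Fin d) (Fin d) ℂ)ˣ) : Matrix (Fin d) (Fin d) ℂ) := by
    rw [Matrix.coe_units_inv, hu]
  rw [hinv] at hz
  have hz0 : z ≠ 0 := spectrum.ne_zero_of_mem_of_unit hz
  have h2 : ((Units.mk0 z hz0 : ℂˣ) : ℂ) ∈
      spectrum ℂ ((u⁻¹ : (Matrix (Fin d) (Fin d) ℂ)ˣ) : Matrix (Fin d) (Fin d) ℂ) := hz
  have h3 := spectrum.inv_mem_iff.mp h2
  rw [inv_inv] at h3
  have h4 : (z⁻¹ : ℂ) ∈ spectrum ℂ (A.map Complex.ofReal) := by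
    rw [hu] at h3
    simpa using h3
  have h5 := hspec _ h4
  rw [norm_inv] at h5
  have habs : 0 < ‖z‖ := norm_pos_iff.mpr hz0
  have hmul : ‖z‖ * (‖z‖)⁻¹ = 1 := mul_inv_cancel₀ habs.ne'
  nlinarith

/-- The open Euclidean unit ball in `ℝᵈ`. -/
def eucBall (d : ℕ) : Set (Fin d → ℝ) := {x | ∑ i, x i ^ 2 < 1}

/-- The step function `ρ_A` (equal to `b^k` on `Δ_{k+1} \ Δ_k` and `0` at `0`) built from
the nested ellipsoids `Δ_k = A^k(Δ)` of a dilation matrix `A` is a homogeneous quasi-norm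
associated with `A`: it vanishes exactly at `0`, satisfies `ρ_A(Ax) = b ρ_A(x)`, and a
quasi-triangle inequality `ρ_A(x+y) ≤ c (ρ_A(x) + ρ_A(y))`. -/
theorem stmt_7 (d : ℕ) (A : Matrix (Fin d) (Fin d) ℝ) (hA : IsUnit A.det)
    (hspec : ∀ z ∈ spectrum ℂ (A.map (Complex.ofReal)), 1 < ‖z‖)
    (b : ℝ) (hb : b = |A.det|)
    (P : Matrix (Fin d) (Fin d) ℝ) (hP : IsUnit P.det)
    (Δ : Set (Fin d → ℝ)) (hΔ : Δ = P.mulVec '' eucBall d)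
    (hnest : Δ ⊆ A.mulVec '' Δ)
    (Δk : ℤ → Set (Fin d → ℝ)) (hΔk : ∀ k : ℤ, Δk k = (A ^ k).mulVec '' Δ)
    (ρ : (Fin d → ℝ) → ℝ) (hρ0 : ρ 0 = 0)
    (hρ : ∀ (k : ℤ) (x : Fin d → ℝ), x ∈ Δk (k + 1) \ Δk k → ρ x = b ^ k) :
    (∀ x, ρ x = 0 ↔ x = 0) ∧
    (∀ x, ρ (A.mulVec x) = b * ρ x) ∧
    (∃ c : ℝ, 0 < c ∧ ∀ x y, ρ (x + y) ≤ c * (ρ x + ρ y)) := by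
  rcases Nat.eq_zero_or_pos d with hd | hd
  · -- degenerate case `d = 0`
    subst hd
    have hall : ∀ v : Fin 0 → ℝ, v = 0 := fun v => funext fun i => i.elim0
    refine ⟨fun x => ⟨fun _ => hall x, fun h => by rw [h, hρ0]⟩, fun x => ?_, 1, one_pos, fun x y => ?_⟩
    · rw [hall (A.mulVec x), hall x, hρ0]; ring
    · rw [hall (x + y), hall x, hall y, hρ0]; norm_num
  -- main case `0 < d`
  have hb0 : 0 < b := by
    rw [hb]
    exact abs_pos.mpr hA.ne_zero
  -- basic facts about Δ
  have h0ball : (0 : Fin d → ℝ) ∈ eucBall d := by simp [eucBall]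
  have h0Δ : (0 : Fin d → ℝ) ∈ Δ := by
    rw [hΔ]
    exact ⟨0, h0ball, Matrix.mulVec_zero P⟩
  have hΔopen : IsOpen Δ := by
    have hball : IsOpen (eucBall d) := by
      have hc : Continuous fun x : Fin d → ℝ => ∑ i, x i ^ 2 := by fun_prop
      exact isOpen_lt hc continuous_const
    have himg : P.mulVec '' eucBall d = Matrix.toLin' P⁻¹ ⁻¹' eucBall d := by
      ext x
      constructor
      · rintro ⟨w, hw, rfl⟩
        have : Matrix.toLin' P⁻¹ (P.mulVec w) = w := by
          rw [Matrix.toLin'_apply, Matrix.mulVec_mulVec, Matrix.nonsing_inv_mul _ hP,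
            Matrix.one_mulVec]
        simpa [Set.mem_preimage, this] using hw
      · intro hx
        refine ⟨P⁻¹.mulVec x, hx, ?_⟩
        · rw [Matrix.mulVec_mulVec, Matrix.mul_nonsing_inv _ hP, Matrix.one_mulVec]
    rw [hΔ, himg]
    exact hball.preimage (LinearMap.continuous_of_finiteDimensional _)
  have hΔbdd : ∀ y ∈ Δ, ‖y‖ ≤ ‖P‖ := by
    rw [hΔ]
    rintro y ⟨w, hw, rfl⟩
    have hw' : ∑ i, w i ^ 2 < 1 := hw
    have hw1 : ‖w‖ ≤ 1 := by
      rw [pi_norm_le_iff_of_nonneg zero_le_one]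
      intro i
      have h1 : w i ^ 2 ≤ ∑ j, w j ^ 2 :=
        Finset.single_le_sum (f := fun j => w j ^ 2) (fun j _ => sq_nonneg _) (Finset.mem_univ i)
      have h2 : w i ^ 2 ≤ 1 := h1.trans hw'.le
      rw [Real.norm_eq_abs, abs_le]
      constructor <;> nlinarith
    calc ‖P.mulVec w‖ ≤ ‖P‖ * ‖w‖ := Matrix.linfty_opNorm_mulVec _ _
      _ ≤ ‖P‖ * 1 := mul_le_mul_of_nonneg_left hw1 (norm_nonneg _)
      _ = ‖P‖ := mul_one _
  -- membership characterization
  have hmem : ∀ (k : ℤ) (x : Fin d → ℝ), x ∈ Δk k ↔ (A ^ (-k)).mulVec x ∈ Δ := by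
    intro k x
    rw [hΔk]
    constructor
    · rintro ⟨w, hw, rfl⟩
      rwa [Matrix.mulVec_mulVec, ← Matrix.zpow_add hA, neg_add_cancel, zpow_zero,
        Matrix.one_mulVec]
    · intro hx
      refine ⟨_, hx, ?_⟩
      rw [Matrix.mulVec_mulVec, ← Matrix.zpow_add hA, add_neg_cancel, zpow_zero,
        Matrix.one_mulVec]
  -- monotonicity
  have hmono : ∀ k : ℤ, Δk k ⊆ Δk (k + 1) := by
    intro k x hx
    rw [hmem] at hx ⊢
    obtain ⟨w, hw, hwx⟩ := hnest hx
    have heq : (A ^ (-(k + 1))).mulVec x = w := by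
      have h1 : A ^ (-(k + 1)) = A ^ (-1 : ℤ) * A ^ (-k) := by
        rw [← Matrix.zpow_add hA]; congr 1; ring
      rw [h1, ← Matrix.mulVec_mulVec, ← hwx, Matrix.zpow_neg_one, Matrix.mulVec_mulVec,
        Matrix.nonsing_inv_mul _ hA, Matrix.one_mulVec]
    rw [heq]
    exact hw
  have hmonoN : ∀ (n : ℕ) (k : ℤ), Δk k ⊆ Δk (k + n) := by
    intro n
    induction n with
    | zero =>
      intro k
      have h : k + ((0 : ℕ) : ℤ) = k := by simp
      rw [h]
    | succ n ih =>
      intro k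
      have h : k + ((n + 1 : ℕ) : ℤ) = k + (n : ℤ) + 1 := by push_cast; ring
      rw [h]
      exact (ih k).trans (hmono _)
  have hmono' : ∀ {k l : ℤ}, k ≤ l → Δk k ⊆ Δk l := by
    intro k l hkl
    have h : l = k + (((l - k).toNat : ℕ) : ℤ) := by omega
    rw [h]
    exact hmonoN _ k
  -- the complex inverse matrix and its powers
  set Bc : Matrix (Fin d) (Fin d) ℂ := (A.map Complex.ofReal)⁻¹ with hBc
  have hT : Tendsto (fun n : ℕ => ‖Bc ^ n‖) atTop (𝓝 0) :=
    aux_norm_pow_tendsto hd Bc (aux_spec_inv A hA hspec)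
  have hmapinv : (A⁻¹).map Complex.ofReal = Bc := by
    rw [hBc]
    symm
    apply Matrix.inv_eq_right_inv
    have hfun : (Complex.ofReal : ℝ → ℂ) = ⇑Complex.ofRealHom := rfl
    rw [hfun, ← Matrix.map_mul, Matrix.mul_nonsing_inv _ hA]
    exact Matrix.map_one _ (map_zero Complex.ofRealHom) (map_one Complex.ofRealHom)
  have hmappow : ∀ n : ℕ, (A⁻¹ ^ n).map Complex.ofReal = Bc ^ n := by
    intro n
    induction n with
    | zero =>
      simp only [pow_zero]
      exact Matrix.map_one _ (map_zero Complex.ofRealHom) (map_one Complex.ofRealHom)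
    | succ n ih =>
      have hfun : (Complex.ofReal : ℝ → ℂ) = ⇑Complex.ofRealHom := rfl
      rw [pow_succ, pow_succ, hfun, Matrix.map_mul, ← hfun, ih, hmapinv]
  have hnormmap : ∀ M : Matrix (Fin d) (Fin d) ℝ, ‖M.map Complex.ofReal‖ = ‖M‖ := by
    intro M
    have : ‖M.map Complex.ofReal‖₊ = ‖M‖₊ := by
      rw [Matrix.linfty_opNNNorm_def, Matrix.linfty_opNNNorm_def]
      simp [Matrix.map_apply]
    calc ‖M.map Complex.ofReal‖ = ((‖M.map Complex.ofReal‖₊ : NNReal) : ℝ) := rfl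
      _ = ((‖M‖₊ : NNReal) : ℝ) := by rw [this]
      _ = ‖M‖ := rfl
  have hnormpow : ∀ n : ℕ, ‖(A⁻¹ ^ n : Matrix (Fin d) (Fin d) ℝ)‖ = ‖Bc ^ n‖ := by
    intro n
    rw [← hmappow n, hnormmap]
  have hzpownat : ∀ n : ℕ, A ^ (-(n : ℤ)) = A⁻¹ ^ n := by
    intro n
    rw [Matrix.zpow_neg_natCast, ← Matrix.inv_pow']
  -- absorption of bounded sets
  obtain ⟨ε, hε, hball⟩ := Metric.isOpen_iff.mp hΔopen 0 h0Δ
  have habs : ∀ R : ℝ, 0 ≤ R → ∃ m : ℕ, ∀ x : Fin d → ℝ, ‖x‖ ≤ R → x ∈ Δk m := by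
    intro R hR
    have hev : ∀ᶠ n : ℕ in atTop, ‖Bc ^ n‖ < ε / (R + 1) :=
      hT.eventually_lt_const (by positivity)
    obtain ⟨n, hn⟩ := hev.exists
    refine ⟨n, fun x hx => ?_⟩
    rw [hmem]
    apply hball
    rw [Metric.mem_ball, dist_zero_right, hzpownat]
    have hbn : 0 ≤ ‖Bc ^ n‖ := norm_nonneg _
    calc ‖(A⁻¹ ^ n).mulVec x‖ ≤ ‖(A⁻¹ ^ n : Matrix (Fin d) (Fin d) ℝ)‖ * ‖x‖ :=
          Matrix.linfty_opNorm_mulVec _ _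
      _ = ‖Bc ^ n‖ * ‖x‖ := by rw [hnormpow]
      _ ≤ ‖Bc ^ n‖ * R := mul_le_mul_of_nonneg_left hx hbn
      _ < ε := by
          have h1 : ‖Bc ^ n‖ * R ≤ ‖Bc ^ n‖ * (R + 1) := by nlinarith
          have h2 : ‖Bc ^ n‖ * (R + 1) < ε / (R + 1) * (R + 1) := by
            apply mul_lt_mul_of_pos_right hn; linarith
          have h3 : ε / (R + 1) * (R + 1) = ε := by field_simp
          linarith
  -- shrinking to zero
  have hshrink : ∀ x : Fin d → ℝ, x ≠ 0 → ∃ k : ℤ, x ∉ Δk k := by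
    intro x hx
    have hxpos : 0 < ‖x‖ := norm_pos_iff.mpr hx
    have hev : ∀ᶠ n : ℕ in atTop, ‖Bc ^ n‖ < ‖x‖ / (‖P‖ + 1) :=
      hT.eventually_lt_const (by positivity)
    obtain ⟨n, hn⟩ := hev.exists
    refine ⟨-(n : ℤ), fun hmem' => ?_⟩
    rw [hΔk] at hmem'
    obtain ⟨w, hw, hwx⟩ := hmem'
    have hwP : ‖w‖ ≤ ‖P‖ := hΔbdd w hw
    have hP0 : 0 ≤ ‖P‖ := norm_nonneg _
    have hxle : ‖x‖ ≤ ‖Bc ^ n‖ * ‖P‖ := by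
      rw [← hwx, hzpownat]
      calc ‖(A⁻¹ ^ n).mulVec w‖ ≤ ‖(A⁻¹ ^ n : Matrix (Fin d) (Fin d) ℝ)‖ * ‖w‖ :=
            Matrix.linfty_opNorm_mulVec _ _
        _ = ‖Bc ^ n‖ * ‖w‖ := by rw [hnormpow]
        _ ≤ ‖Bc ^ n‖ * ‖P‖ := mul_le_mul_of_nonneg_left hwP (norm_nonneg _)
    have hbn : 0 ≤ ‖Bc ^ n‖ := norm_nonneg _
    have h1 : ‖Bc ^ n‖ * ‖P‖ ≤ ‖Bc ^ n‖ * (‖P‖ + 1) := by nlinarith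
    have h2 : ‖Bc ^ n‖ * (‖P‖ + 1) < ‖x‖ / (‖P‖ + 1) * (‖P‖ + 1) := by
      apply mul_lt_mul_of_pos_right hn; linarith
    have h3 : ‖x‖ / (‖P‖ + 1) * (‖P‖ + 1) = ‖x‖ := by field_simp
    linarith
  -- the key decomposition of nonzero vectors
  have hval : ∀ x : Fin d → ℝ, x ≠ 0 →
      ∃ k : ℤ, (x ∈ Δk (k + 1) \ Δk k) ∧ ∀ N : ℤ, x ∈ Δk N → k + 1 ≤ N := by
    intro x hx
    obtain ⟨k1, hk1⟩ := hshrink x hx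
    obtain ⟨m0, hm0⟩ := habs ‖x‖ (norm_nonneg x)
    have Hbdd : ∃ b' : ℤ, ∀ z : ℤ, x ∈ Δk z → b' ≤ z := by
      refine ⟨k1, fun z hz => ?_⟩
      by_contra hzb
      push_neg at hzb
      exact hk1 (hmono' hzb.le hz)
    obtain ⟨lb, hlbmem, hlbmin⟩ := Int.exists_least_of_bdd Hbdd ⟨m0, hm0 x le_rfl⟩
    refine ⟨lb - 1, ⟨⟨by rwa [sub_add_cancel], fun hc => ?_⟩, fun N hN => ?_⟩⟩
    · have := hlbmin _ hc; omega
    · have := hlbmin N hN; omega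
  -- nonnegativity of ρ
  have hnn : ∀ x : Fin d → ℝ, 0 ≤ ρ x := by
    intro x
    by_cases hx : x = 0
    · rw [hx, hρ0]
    · obtain ⟨k, hk, _⟩ := hval x hx
      rw [hρ k x hk]
      exact (zpow_pos hb0 _).le
  -- b ≥ 1 via the Haar measure
  have hΔsub : Δ ⊆ Metric.closedBall 0 ‖P‖ := by
    intro y hy
    rw [Metric.mem_closedBall, dist_zero_right]
    exact hΔbdd y hy
  have hone_le_b : 1 ≤ b := by
    by_contra hlt
    push_neg at hlt
    set μ : MeasureTheory.Measure (Fin d → ℝ) := MeasureTheory.volume with hμ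
    have him : μ (A.mulVec '' Δ) = ENNReal.ofReal b * μ Δ := by
      have h1 : A.mulVec '' Δ = (Matrix.toLin' A : (Fin d → ℝ) →ₗ[ℝ] (Fin d → ℝ)) '' Δ := by
        apply Set.image_congr
        intro x _
        rw [Matrix.toLin'_apply]
      rw [h1, MeasureTheory.Measure.addHaar_image_linearMap, LinearMap.det_toLin', hb]
    have hpos : 0 < μ Δ := hΔopen.measure_pos μ ⟨0, h0Δ⟩
    have hfin : μ Δ < ⊤ :=
      lt_of_le_of_lt (MeasureTheory.measure_mono hΔsub)
        (MeasureTheory.measure_closedBall_lt_top)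
    have hle : μ Δ ≤ ENNReal.ofReal b * μ Δ := him ▸ MeasureTheory.measure_mono hnest
    have hblt : ENNReal.ofReal b < 1 := by
      rw [← ENNReal.ofReal_one]
      exact (ENNReal.ofReal_lt_ofReal_iff one_pos).mpr hlt
    have : ENNReal.ofReal b * μ Δ < 1 * μ Δ :=
      (ENNReal.mul_lt_mul_iff_left hpos.ne' hfin.ne).mpr hblt
    rw [one_mul] at this
    exact lt_irrefl _ (lt_of_le_of_lt hle this)
  -- the step property
  have hstep : ∀ (j : ℤ) (x : Fin d → ℝ), x ∈ Δk j ↔ A.mulVec x ∈ Δk (j + 1) := by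
    intro j x
    rw [hmem, hmem, Matrix.mulVec_mulVec]
    have heq : A ^ (-(j + 1)) * A = A ^ (-j) := by
      rw [← Matrix.zpow_add_one hA]
      congr 1
      ring
    rw [heq]
  -- upper bound lemma
  have hub : ∀ (z : Fin d → ℝ) (N : ℤ), z ∈ Δk N → ρ z ≤ b ^ (N - 1) := by
    intro z N hz
    by_cases h0 : z = 0
    · rw [h0, hρ0]
      exact (zpow_pos hb0 _).le
    · obtain ⟨k, hk, hmin⟩ := hval z h0
      rw [hρ k z hk]
      apply zpow_le_zpow_right₀ hone_le_b
      have := hmin N hz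
      omega
  refine ⟨?_, ?_, ?_⟩
  · -- ρ x = 0 ↔ x = 0
    intro x
    constructor
    · intro h
      by_contra hx
      obtain ⟨k, hk, _⟩ := hval x hx
      rw [hρ k x hk] at h
      exact (zpow_pos hb0 k).ne' h
    · intro h
      rw [h, hρ0]
  · -- homogeneity
    intro x
    by_cases hx : x = 0
    · rw [hx, Matrix.mulVec_zero, hρ0]
      ring
    · obtain ⟨k, hk, _⟩ := hval x hx
      have h1 : ρ x = b ^ k := hρ k x hk
      have h2 : A.mulVec x ∈ Δk (k + 1 + 1) \ Δk (k + 1) :=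
        ⟨(hstep (k + 1) x).mp hk.1, fun hc => hk.2 ((hstep k x).mpr hc)⟩
      rw [hρ (k + 1) _ h2, h1, zpow_add_one₀ (ne_of_gt hb0), mul_comm]
  · -- quasi-triangle inequality
    obtain ⟨m, hmmem⟩ := habs (‖P‖ + ‖P‖) (by positivity)
    have hc0 : (0 : ℝ) < b ^ (m : ℤ) := zpow_pos hb0 _
    refine ⟨b ^ (m : ℤ), hc0, ?_⟩
    have hsum : ∀ (j : ℤ) (x y : Fin d → ℝ), x ∈ Δk j → y ∈ Δk j → x + y ∈ Δk (j + m) := by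
      intro j x y hx hy
      rw [hmem] at hx hy ⊢
      have hXY : (A ^ (-j)).mulVec x + (A ^ (-j)).mulVec y ∈ Δk m := by
        apply hmmem
        calc ‖(A ^ (-j)).mulVec x + (A ^ (-j)).mulVec y‖
            ≤ ‖(A ^ (-j)).mulVec x‖ + ‖(A ^ (-j)).mulVec y‖ := norm_add_le _ _
          _ ≤ ‖P‖ + ‖P‖ := add_le_add (hΔbdd _ hx) (hΔbdd _ hy)
      rw [hmem] at hXY
      have heq : (A ^ (-(j + (m : ℤ)))).mulVec (x + y)
          = (A ^ (-(m : ℤ))).mulVec ((A ^ (-j)).mulVec x + (A ^ (-j)).mulVec y) := by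
        rw [Matrix.mulVec_add, Matrix.mulVec_add, Matrix.mulVec_mulVec, Matrix.mulVec_mulVec,
          ← Matrix.zpow_add hA]
        have h5 : -(m : ℤ) + -j = -(j + (m : ℤ)) := by ring
        rw [h5]
      rw [heq]
      exact hXY
    intro x y
    by_cases hx : x = 0
    · rw [hx, zero_add, hρ0]
      have h1 := hnn y
      have hc1 : 1 ≤ b ^ (m : ℤ) := one_le_zpow₀ hone_le_b (Int.natCast_nonneg m)
      nlinarith
    by_cases hy : y = 0
    · rw [hy, add_zero, hρ0]
      have h1 := hnn x
      have hc1 : 1 ≤ b ^ (m : ℤ) := one_le_zpow₀ hone_le_b (Int.natCast_nonneg m)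
      nlinarith
    obtain ⟨k, hk, _⟩ := hval x hx
    obtain ⟨l, hl, _⟩ := hval y hy
    have hρx : ρ x = b ^ k := hρ k x hk
    have hρy : ρ y = b ^ l := hρ l y hl
    set j : ℤ := max k l + 1 with hj
    have hxj : x ∈ Δk j := hmono' (by omega : k + 1 ≤ j) hk.1
    have hyj : y ∈ Δk j := hmono' (by omega : l + 1 ≤ j) hl.1
    have hxy : x + y ∈ Δk (j + m) := hsum j x y hxj hyj
    have h1 : ρ (x + y) ≤ b ^ (j + (m : ℤ) - 1) := hub _ _ hxy
    have h2 : j + (m : ℤ) - 1 = (m : ℤ) + max k l := by omega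
    have h3 : b ^ ((m : ℤ) + max k l) = b ^ (m : ℤ) * b ^ (max k l) := zpow_add₀ hb0.ne' _ _
    have h4 : b ^ (max k l) ≤ ρ x + ρ y := by
      rcases le_total k l with h | h
      · rw [max_eq_right h, ← hρy]
        have := hnn x
        linarith
      · rw [max_eq_left h, ← hρx]
        have := hnn y
        linarith
    calc ρ (x + y) ≤ b ^ (j + (m : ℤ) - 1) := h1
      _ = b ^ (m : ℤ) * b ^ (max k l) := by rw [h2, h3]
      _ ≤ b ^ (m : ℤ) * (ρ x + ρ y) := mul_le_mul_of_nonneg_left h4 hc0.le
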